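/- Let (H_X, H_Z) be a CSS code and H_C ∈ F₂^{(n_c−k_c) × n_c} a classical parity check matrix of full row rank. Let H'_X, H'_Z be the check matrices of the generalized thickened code. Then: (1) ker(H'_X) = rowspan(H'_Z) + span{ (z ⊗ u, 0) : z ∈ ker(H_X), u ∈ F₂^{n_c} }, where (z ⊗ u, 0) denotes the vector supported on region A equal to the Kronecker product z ⊗ u and zero on region B; and (2) for every z ∈ ker(H_X) \ rowspan(H_Z) and every u ∈ F₂^{n_c} with u ∉ rowspan(H_C), the vector (z ⊗ u, 0) does NOT lie in rowspan(H'_Z). In other words, the Z logical operators of the thickened code are spanned, modulo Z stabilizers, by ( (ker H_X / rowspan H_Z) ⊗ (F₂^{n_c} / rowspan H_C) | 0 ). -/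

import Mathlib

open Matrix

/-- The `F₂`-span of the rows of a matrix. -/
noncomputable def rowSpan {ι κ : Type*} [Fintype ι] [Fintype κ] (M : Matrix ι κ (ZMod 2)) :
    Submodule (ZMod 2) (κ → ZMod 2) :=
  Submodule.span (ZMod 2) (Set.range fun i => M i)

/-- The kernel `{v : M v = 0}` of a matrix, as a submodule. -/
noncomputable def kerMat {ι κ : Type*} [Fintype ι] [Fintype κ] (M : Matrix ι κ (ZMod 2)) :
    Submodule (ZMod 2) (κ → ZMod 2) :=
  LinearMap.ker M.mulVecLin

/-- X check matrix of the generalized thickened code: `( H_X ⊗ I_{n_c} | I_{n_X} ⊗ H_Cᵀ )`.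
Region A qubits are indexed by `Fin n × Fin nc`, region B qubits by `Fin nX × Fin r`. -/
def thickX {nX n r nc : ℕ} (HX : Matrix (Fin nX) (Fin n) (ZMod 2))
    (HC : Matrix (Fin r) (Fin nc) (ZMod 2)) :
    Matrix (Fin nX × Fin nc) ((Fin n × Fin nc) ⊕ (Fin nX × Fin r)) (ZMod 2) :=
  Matrix.of fun s p =>
    match p with
    | Sum.inl (i, c) => if c = s.2 then HX s.1 i else 0
    | Sum.inr (x, j) => if x = s.1 then HC j s.2 else 0

/-- Z check matrix of the generalized thickened code:
first block row `( H_Z ⊗ I_{n_c} | 0 )`,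
second block row `( I_n ⊗ H_C | H_Xᵀ ⊗ I_{n_c-k_c} )`. -/
def thickZ {nX nZ n r nc : ℕ} (HX : Matrix (Fin nX) (Fin n) (ZMod 2))
    (HZ : Matrix (Fin nZ) (Fin n) (ZMod 2)) (HC : Matrix (Fin r) (Fin nc) (ZMod 2)) :
    Matrix ((Fin nZ × Fin nc) ⊕ (Fin n × Fin r)) ((Fin n × Fin nc) ⊕ (Fin nX × Fin r)) (ZMod 2) :=
  Matrix.of fun s p =>
    match s, p with
    | Sum.inl (z, c), Sum.inl (i, c') => if c' = c then HZ z i else 0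
    | Sum.inl _, Sum.inr _ => 0
    | Sum.inr (i, j), Sum.inl (i', c) => if i' = i then HC j c else 0
    | Sum.inr (i, j), Sum.inr (x, j') => if j' = j then HX x i else 0


open Finset
section Helpers

open Finset

variable {nX nZ n r nc : ℕ}

lemma mem_rowSpan_iff {ι κ : Type*} [Fintype ι] [Fintype κ] (M : Matrix ι κ (ZMod 2))
    (v : κ → ZMod 2) :
    v ∈ rowSpan M ↔ ∃ c : ι → ZMod 2, ∑ i, c i • M i = v := by
  rw [rowSpan]
  exact Submodule.mem_span_range_iff_exists_fun _

lemma add_self_zmod2 : ∀ a : ZMod 2, a + a = 0 := by decide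

lemma thickX_mulVec (HX : Matrix (Fin nX) (Fin n) (ZMod 2))
    (HC : Matrix (Fin r) (Fin nc) (ZMod 2))
    (w : ((Fin n × Fin nc) ⊕ (Fin nX × Fin r)) → ZMod 2) (x : Fin nX) (c : Fin nc) :
    (thickX HX HC).mulVec w (x, c) =
      (∑ i, HX x i * w (Sum.inl (i, c))) + ∑ j, HC j c * w (Sum.inr (x, j)) := by
  rw [Matrix.mulVec, dotProduct, Fintype.sum_sum_type]
  congr 1
  · rw [Fintype.sum_prod_type]
    simp [thickX, ite_mul]
  · rw [Fintype.sum_prod_type_right]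
    simp [thickX, ite_mul]

lemma thickZ_sum_inl (HX : Matrix (Fin nX) (Fin n) (ZMod 2))
    (HZ : Matrix (Fin nZ) (Fin n) (ZMod 2)) (HC : Matrix (Fin r) (Fin nc) (ZMod 2))
    (γ : ((Fin nZ × Fin nc) ⊕ (Fin n × Fin r)) → ZMod 2) (i : Fin n) (c : Fin nc) :
    (∑ s, γ s • thickZ HX HZ HC s) (Sum.inl (i, c)) =
      (∑ z0, γ (Sum.inl (z0, c)) * HZ z0 i) + ∑ j, γ (Sum.inr (i, j)) * HC j c := by
  rw [Finset.sum_apply, Fintype.sum_sum_type]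
  congr 1
  · rw [Fintype.sum_prod_type_right]
    simp [thickZ, mul_ite]
  · rw [Fintype.sum_prod_type_right]
    simp [thickZ, mul_ite]

lemma thickZ_sum_inr (HX : Matrix (Fin nX) (Fin n) (ZMod 2))
    (HZ : Matrix (Fin nZ) (Fin n) (ZMod 2)) (HC : Matrix (Fin r) (Fin nc) (ZMod 2))
    (γ : ((Fin nZ × Fin nc) ⊕ (Fin n × Fin r)) → ZMod 2) (x : Fin nX) (j : Fin r) :
    (∑ s, γ s • thickZ HX HZ HC s) (Sum.inr (x, j)) =
      ∑ i, γ (Sum.inr (i, j)) * HX x i := by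
  rw [Finset.sum_apply, Fintype.sum_sum_type]
  simp only [Pi.smul_apply, smul_eq_mul]
  rw [Fintype.sum_prod_type]
  simp only [thickZ, Matrix.of_apply, mul_zero, Finset.sum_const_zero, zero_add]
  rw [Fintype.sum_prod_type]
  simp [mul_ite]

end Helpers
lemma rowSpan_thickZ_le_ker (HX : Matrix (Fin nX) (Fin n) (ZMod 2))
    (HZ : Matrix (Fin nZ) (Fin n) (ZMod 2)) (HC : Matrix (Fin r) (Fin nc) (ZMod 2))
    (hcss : HX * HZ.transpose = 0) :
    rowSpan (thickZ HX HZ HC) ≤ kerMat (thickX HX HC) := by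
  rw [rowSpan, Submodule.span_le]
  rintro v ⟨s, rfl⟩
  simp only [SetLike.mem_coe, kerMat, LinearMap.mem_ker, Matrix.mulVecLin_apply]
  funext p
  obtain ⟨x, c⟩ := p
  rw [thickX_mulVec]
  match s with
  | Sum.inl (z0, c0) =>
      have hh : ∑ i, HX x i * HZ z0 i = 0 := by
        have := congrFun (congrFun hcss x) z0
        simpa [Matrix.mul_apply, Matrix.transpose_apply] using this
      by_cases hc : c = c0 <;>
        simp [thickZ, hc, hh]
  | Sum.inr (i0, j0) =>
      simp only [thickZ, Matrix.of_apply, mul_ite, mul_zero, Finset.sum_ite_eq',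
        Finset.mem_univ, if_true, Pi.zero_apply]
      rw [mul_comm]
      exact add_self_zmod2 _

lemma spanS_le_ker (HX : Matrix (Fin nX) (Fin n) (ZMod 2))
    (HC : Matrix (Fin r) (Fin nc) (ZMod 2)) :
    Submodule.span (ZMod 2)
        {w : ((Fin n × Fin nc) ⊕ (Fin nX × Fin r)) → ZMod 2 |
          ∃ (z : Fin n → ZMod 2) (u : Fin nc → ZMod 2),
            HX.mulVec z = 0 ∧
              w = Sum.elim (fun p : Fin n × Fin nc => z p.1 * u p.2)
                    (fun _ : Fin nX × Fin r => 0)} ≤ kerMat (thickX HX HC) := by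
  rw [Submodule.span_le]
  rintro v ⟨z, u, hz, rfl⟩
  simp only [SetLike.mem_coe, kerMat, LinearMap.mem_ker, Matrix.mulVecLin_apply]
  funext p
  obtain ⟨x, c⟩ := p
  rw [thickX_mulVec]
  simp only [Sum.elim_inl, Sum.elim_inr, mul_zero, Finset.sum_const_zero, add_zero,
    Pi.zero_apply]
  have : ∑ i, HX x i * (z i * u c) = (∑ i, HX x i * z i) * u c := by
    rw [Finset.sum_mul]
    exact Finset.sum_congr rfl fun i _ => (mul_assoc _ _ _).symm
  rw [this]
  have hz' : ∑ i, HX x i * z i = 0 := by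
    have := congrFun hz x
    simpa [Matrix.mulVec, dotProduct] using this
  rw [hz', zero_mul]

/-- **Z logical operators of the generalized thickened code** are spanned, modulo the
Z stabilizers, by `( (ker H_X / rowspan H_Z) ⊗ (F₂^{n_c} / rowspan H_C) | 0 )`. -/
theorem thickened_Z_logicals {nX nZ n r nc : ℕ}
    (HX : Matrix (Fin nX) (Fin n) (ZMod 2)) (HZ : Matrix (Fin nZ) (Fin n) (ZMod 2))
    (HC : Matrix (Fin r) (Fin nc) (ZMod 2))
    (hcss : HX * HZ.transpose = 0)
    (hrank : LinearIndependent (ZMod 2) (fun i : Fin r => HC i)) :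
    (kerMat (thickX HX HC) =
        rowSpan (thickZ HX HZ HC) ⊔
          Submodule.span (ZMod 2)
            {w : ((Fin n × Fin nc) ⊕ (Fin nX × Fin r)) → ZMod 2 |
              ∃ (z : Fin n → ZMod 2) (u : Fin nc → ZMod 2),
                HX.mulVec z = 0 ∧
                  w = Sum.elim (fun p : Fin n × Fin nc => z p.1 * u p.2)
                        (fun _ : Fin nX × Fin r => 0)}) ∧
      (∀ z : Fin n → ZMod 2, HX.mulVec z = 0 → z ∉ rowSpan HZ →
        ∀ u : Fin nc → ZMod 2, u ∉ rowSpan HC →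
          Sum.elim (fun p : Fin n × Fin nc => z p.1 * u p.2)
              (fun _ : Fin nX × Fin r => (0 : ZMod 2)) ∉ rowSpan (thickZ HX HZ HC)) := by
  constructor
  · apply le_antisymm
    · -- kernel ⊆ stabilizers + logicals
      intro w hw
      have hw' : ∀ x c, (∑ i, HX x i * w (Sum.inl (i, c)))
          + ∑ j, HC j c * w (Sum.inr (x, j)) = 0 := by
        intro x c
        rw [← thickX_mulVec]
        have : (thickX HX HC).mulVec w = 0 := hw
        exact congrFun this (x, c)
      -- left inverse of vecMul · HC
      have hker : LinearMap.ker (HC.vecMulLinear) = ⊥ := by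
        rw [LinearMap.ker_eq_bot']
        intro cf hcf
        have hsum : ∑ j, cf j • HC j = 0 := by
          funext q
          have := congrFun hcf q
          simpa [Matrix.vecMulLinear, Matrix.vecMul, dotProduct,
            Finset.sum_apply] using this
        funext j
        exact Fintype.linearIndependent_iff.mp hrank cf hsum j
      obtain ⟨g, hg⟩ := LinearMap.exists_leftInverse_of_injective _ hker
      set A : Fin n → Fin nc → ZMod 2 := fun i c => w (Sum.inl (i, c)) with hA
      set B : Fin nX → Fin r → ZMod 2 := fun x j => w (Sum.inr (x, j)) with hB
      set β : Fin n → Fin r → ZMod 2 := fun i => g (A i) with hβ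
      set γ : ((Fin nZ × Fin nc) ⊕ (Fin n × Fin r)) → ZMod 2 :=
        Sum.elim (fun _ => 0) (fun p => β p.1 p.2) with hγ
      set v1 : ((Fin n × Fin nc) ⊕ (Fin nX × Fin r)) → ZMod 2 :=
        ∑ s, γ s • thickZ HX HZ HC s with hv1
      have hv1mem : v1 ∈ rowSpan (thickZ HX HZ HC) := (mem_rowSpan_iff _ _).2 ⟨γ, rfl⟩
      have hkey : ∀ x, (∑ i, HX x i • A i) = HC.vecMulLinear (B x) := by
        intro x
        funext c
        have h1 := hw' x c
        have h2 : ∑ i, HX x i * A i c = ∑ j, HC j c * B x j := by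
          have := congrArg (· + ∑ j, HC j c * B x j) h1
          simpa [hA, hB, add_assoc, add_self_zmod2, Finset.sum_add_distrib] using this
        calc (∑ i, HX x i • A i) c = ∑ i, HX x i * A i c := by
              simp [Finset.sum_apply]
          _ = ∑ j, HC j c * B x j := h2
          _ = HC.vecMulLinear (B x) c := by
              simp [Matrix.vecMulLinear, Matrix.vecMul, dotProduct, mul_comm]
      have hv1B : ∀ x j, v1 (Sum.inr (x, j)) = B x j := by
        intro x j
        rw [hv1, thickZ_sum_inr]
        have : ∑ i, γ (Sum.inr (i, j)) * HX x i = (g (∑ i, HX x i • A i)) j := by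
          rw [map_sum]
          simp only [Finset.sum_apply, _root_.map_smul, Pi.smul_apply, smul_eq_mul]
          exact Finset.sum_congr rfl fun i _ => by
            simp [hγ, hβ, mul_comm]
        rw [this, hkey x]
        have := LinearMap.congr_fun hg (B x)
        simpa using congrFun (congrArg (fun h => h) this) j
      -- w2 := w + v1 has zero B-part and lies in the kernel
      set w2 : ((Fin n × Fin nc) ⊕ (Fin nX × Fin r)) → ZMod 2 := w + v1 with hw2
      have hw2B : ∀ x j, w2 (Sum.inr (x, j)) = 0 := by
        intro x j
        simp only [hw2, Pi.add_apply, hv1B]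
        exact add_self_zmod2 _
      have hw2ker : w2 ∈ kerMat (thickX HX HC) :=
        Submodule.add_mem _ hw (rowSpan_thickZ_le_ker HX HZ HC hcss hv1mem)
      have hw2mv : ∀ x c, (∑ i, HX x i * w2 (Sum.inl (i, c))) = 0 := by
        intro x c
        have h0 : (thickX HX HC).mulVec w2 = 0 := hw2ker
        have := congrFun h0 (x, c)
        rw [thickX_mulVec] at this
        simpa [hw2B] using this
      -- decompose w2 into elementary tensors
      have hw2span : w2 ∈ Submodule.span (ZMod 2)
          {w : ((Fin n × Fin nc) ⊕ (Fin nX × Fin r)) → ZMod 2 |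
            ∃ (z : Fin n → ZMod 2) (u : Fin nc → ZMod 2),
              HX.mulVec z = 0 ∧
                w = Sum.elim (fun p : Fin n × Fin nc => z p.1 * u p.2)
                      (fun _ : Fin nX × Fin r => 0)} := by
        have hdecomp : w2 = ∑ c : Fin nc,
            Sum.elim (fun p : Fin n × Fin nc =>
              w2 (Sum.inl (p.1, c)) * (if p.2 = c then 1 else 0))
              (fun _ : Fin nX × Fin r => (0 : ZMod 2)) := by
          funext p
          match p with
          | Sum.inl (i, c') =>
              simp [Finset.sum_apply, mul_ite, Finset.sum_ite_eq']
          | Sum.inr (x, j) =>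
              simp [Finset.sum_apply, hw2B x j]
        rw [hdecomp]
        apply Submodule.sum_mem
        intro c _
        apply Submodule.subset_span
        refine ⟨fun i => w2 (Sum.inl (i, c)), fun c' => if c' = c then 1 else 0, ?_, rfl⟩
        funext x
        simpa [Matrix.mulVec, dotProduct] using hw2mv x c
      have hw_eq : w = w2 + v1 := by
        funext p
        simp only [hw2, Pi.add_apply]
        rw [add_assoc, add_self_zmod2, add_zero]
      rw [hw_eq]
      exact Submodule.add_mem _ (Submodule.mem_sup_right hw2span)
        (Submodule.mem_sup_left hv1mem)
    · exact sup_le (rowSpan_thickZ_le_ker HX HZ HC hcss) (spanS_le_ker HX HC)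
  · -- part 2
    intro z hz hznot u hu habs
    -- construct a functional φ vanishing on rowSpan HZ with φ z = 1
    set W := rowSpan HZ with hW
    have hπz : W.mkQ z ≠ 0 := by
      simp only [Submodule.mkQ_apply, ne_eq, Submodule.Quotient.mk_eq_zero]
      exact hznot
    set ℓ : ZMod 2 →ₗ[ZMod 2] ((Fin n → ZMod 2) ⧸ W) :=
      LinearMap.toSpanSingleton (ZMod 2) _ (W.mkQ z) with hℓ
    have hℓker : LinearMap.ker ℓ = ⊥ := by
      rw [LinearMap.ker_eq_bot']
      intro a ha
      by_contra hne
      have ha1 : a = 1 := (by decide : ∀ b : ZMod 2, ¬b = 0 → b = 1) a hne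
      rw [ha1] at ha
      simp only [hℓ, LinearMap.toSpanSingleton_apply, one_smul] at ha
      exact hπz ha
    obtain ⟨ψ, hψ⟩ := LinearMap.exists_leftInverse_of_injective _ hℓker
    set φ : (Fin n → ZMod 2) →ₗ[ZMod 2] ZMod 2 := ψ.comp W.mkQ with hφ
    have hφz : φ z = 1 := by
      have h1 : ℓ 1 = W.mkQ z := by simp [hℓ]
      have := LinearMap.congr_fun hψ 1
      simpa [hφ, h1] using this
    have hφW : ∀ v ∈ W, φ v = 0 := by
      intro v hv
      simp [hφ, (Submodule.Quotient.mk_eq_zero W).2 hv]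
    obtain ⟨γ, hγ⟩ := (mem_rowSpan_iff _ _).1 habs
    -- componentwise identity on region A
    have hcomp : ∀ c : Fin nc, u c • z =
        (∑ z0, γ (Sum.inl (z0, c)) • HZ z0)
          + ∑ j, HC j c • (fun i => γ (Sum.inr (i, j))) := by
      intro c
      funext i
      have := congrFun hγ (Sum.inl (i, c))
      rw [thickZ_sum_inl] at this
      simp only [Sum.elim_inl] at this
      simp only [Pi.add_apply, Finset.sum_apply, Pi.smul_apply, smul_eq_mul]
      rw [mul_comm (u c) (z i), ← this]
      congr 1
      exact Finset.sum_congr rfl fun j _ => mul_comm _ _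
    have hu' : ∀ c, u c = ∑ j, (φ fun i => γ (Sum.inr (i, j))) * HC j c := by
      intro c
      have h1 := congrArg φ (hcomp c)
      have hZ0 : ∀ z0, φ (HZ z0) = 0 := fun z0 =>
        hφW _ (Submodule.subset_span ⟨z0, rfl⟩)
      simp only [map_add, map_sum, _root_.map_smul, smul_eq_mul, hφz, mul_one, hZ0,
        mul_zero, Finset.sum_const_zero, zero_add] at h1
      rw [h1]
      exact Finset.sum_congr rfl fun j _ => mul_comm _ _
    apply hu
    rw [mem_rowSpan_iff]
    refine ⟨fun j => φ fun i => γ (Sum.inr (i, j)), ?_⟩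
    funext c
    rw [Finset.sum_apply]
    exact (hu' c).symm
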